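/- For every real d > 0 there exists γ_d ∈ (0, d/3] such that PR(d,γ) < 1 for all γ ∈ (0, γ_d); that is, a mild degree of data interpolation strictly improves over the un-interpolated k-NN at the level of multiplicative constants. -/

import Mathlib

open Real

/-- The performance ratio of interpolated-NN (interpolation level `γ`) to standard k-NN
in dimension `d`. -/
noncomputable def PR (d γ : ℝ) : ℝ :=
  (1 + γ ^ 2 / (d * (d - 2 * γ))) ^ ((4 : ℝ) / (d + 4)) *
    ((d - γ) ^ 2 / (d + 2 - γ) ^ 2 * (d + 2) ^ 2 / d ^ 2) ^ (d / (d + 4))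

/-- For every real `d > 0` there exists `γ_d ∈ (0, d/3]` such that
`PR d γ < 1` for all `γ ∈ (0, γ_d)`: a mild degree of data interpolation strictly
improves over the un-interpolated k-NN at the level of multiplicative constants. -/
theorem PR_lt_one_of_small_gamma (d : ℝ) (hd : 0 < d) :
    ∃ γd : ℝ, 0 < γd ∧ γd ≤ d / 3 ∧ ∀ γ : ℝ, 0 < γ → γ < γd → PR d γ < 1 := by
  have h32 : (0:ℝ) < 3 * d + 2 := by linarith
  have hle : d ^ 2 / (3 * d + 2) ≤ d / 3 := by
    rw [div_le_div_iff₀ h32 (by norm_num : (0:ℝ) < 3)]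
    nlinarith
  refine ⟨d ^ 2 / (3 * d + 2), by positivity, hle, ?_⟩
  intro γ hγ hγd
  have hγd' : γ * (3 * d + 2) < d ^ 2 := (lt_div_iff₀ h32).mp hγd
  have hγ3 : γ < d / 3 := lt_of_lt_of_le hγd hle
  have hd2γ : 0 < d - 2 * γ := by linarith
  have hdγ : 0 < d - γ := by linarith
  have hd2 : 0 < d + 2 - γ := by linarith
  have hd4 : 0 < d + 4 := by linarith
  have hD1 : 0 < d * (d - 2 * γ) := mul_pos hd hd2γ
  have hD2 : 0 < (d + 2 - γ) * d := mul_pos hd2 hd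
  set A : ℝ := 1 + γ ^ 2 / (d * (d - 2 * γ)) with hAdef
  set r : ℝ := (d - γ) * (d + 2) / ((d + 2 - γ) * d) with hrdef
  have hA1 : 1 < A := by
    have : 0 < γ ^ 2 / (d * (d - 2 * γ)) := by positivity
    simp only [hAdef]; linarith
  have hA0 : 0 < A := lt_trans one_pos hA1
  have hr0 : 0 < r := by rw [hrdef]; positivity
  have hB : (d - γ) ^ 2 / (d + 2 - γ) ^ 2 * (d + 2) ^ 2 / d ^ 2 = r ^ 2 := by
    rw [hrdef]; field_simp
  have hB0 : 0 < r ^ 2 := by positivity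
  have hPR : PR d γ = A ^ ((4 : ℝ) / (d + 4)) * (r ^ 2) ^ (d / (d + 4)) := by
    rw [PR, hB]
  have hlogA : Real.log A ≤ A - 1 := Real.log_le_sub_one_of_pos hA0
  have hlogr : Real.log r ≤ r - 1 := Real.log_le_sub_one_of_pos hr0
  have e1 : (A - 1) * (d * (d - 2 * γ)) = γ ^ 2 := by
    rw [hAdef]; have hne : d - γ * 2 ≠ 0 := ne_of_gt (by linarith); field_simp; ring
  have e2 : (r - 1) * ((d + 2 - γ) * d) = -(2 * γ) := by
    rw [hrdef]; field_simp; ring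
  have key : 4 * (A - 1) + 2 * d * (r - 1) < 0 := by
    have hx : A - 1 = γ ^ 2 / (d * (d - 2 * γ)) := by rw [hAdef]; ring
    have hy : r - 1 = -(2 * γ) / ((d + 2 - γ) * d) :=
      eq_div_of_mul_eq (ne_of_gt hD2) e2
    rw [hx, hy]
    have hcomb : 4 * (γ ^ 2 / (d * (d - 2 * γ))) + 2 * d * (-(2 * γ) / ((d + 2 - γ) * d))
        = (4 * γ ^ 2 * ((d + 2 - γ) * d) + 2 * d * (-(2 * γ)) * (d * (d - 2 * γ)))
          / ((d * (d - 2 * γ)) * ((d + 2 - γ) * d)) := by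
      have hne : d - γ * 2 ≠ 0 := ne_of_gt (by linarith); field_simp
    rw [hcomb]
    apply div_neg_of_neg_of_pos _ (mul_pos hD1 hD2)
    nlinarith [mul_pos hd hγ, hγd', sq_nonneg γ, mul_pos (mul_pos hd hγ) hγ,
      mul_pos (mul_pos hd hγ) (mul_pos hγ hγ)]
  have keydiv : 4 / (d + 4) * (A - 1) + d / (d + 4) * (2 * (r - 1)) < 0 := by
    have h : 4 / (d + 4) * (A - 1) + d / (d + 4) * (2 * (r - 1))
        = (4 * (A - 1) + 2 * d * (r - 1)) / (d + 4) := by ring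
    rw [h]; exact div_neg_of_neg_of_pos key hd4
  have hPRpos : 0 < PR d γ := by
    rw [hPR]
    exact mul_pos (Real.rpow_pos_of_pos hA0 _) (Real.rpow_pos_of_pos hB0 _)
  have hlt : Real.log (PR d γ) < 0 := by
    rw [hPR, Real.log_mul (ne_of_gt (Real.rpow_pos_of_pos hA0 _))
      (ne_of_gt (Real.rpow_pos_of_pos hB0 _)), Real.log_rpow hA0, Real.log_rpow hB0,
      Real.log_pow]
    have h4 : (0:ℝ) ≤ 4 / (d + 4) := by positivity
    have hdd : (0:ℝ) ≤ d / (d + 4) := by positivity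
    have h1 : 4 / (d + 4) * Real.log A ≤ 4 / (d + 4) * (A - 1) :=
      mul_le_mul_of_nonneg_left hlogA h4
    have h2' : 2 * Real.log r ≤ 2 * (r - 1) :=
      mul_le_mul_of_nonneg_left hlogr (by norm_num)
    have h2 : d / (d + 4) * (2 * Real.log r) ≤ d / (d + 4) * (2 * (r - 1)) :=
      mul_le_mul_of_nonneg_left h2' hdd
    push_cast
    linarith
  exact (Real.log_neg_iff hPRpos).mp hlt
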